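/- Let (Ω, μ) be a measure space and f, g : Ω → ℝ be measurable, nonnegative, integrable functions with ∫ f dμ = ∫ g dμ = 1, and let n1, n2 > 0 be real numbers. Then ∫ ((n1·f − n2·g)/(n1·f + n2·g))·(f − g) dμ = (2·n1·n2/(n1+n2))·∫ (f − g)²/(n1·f + n2·g) dμ, where all quotients use the convention that division by zero yields zero. -/

import Mathlib

open MeasureTheory

theorem stmt_4 {Ω : Type*} [MeasurableSpace Ω] (μ : Measure Ω)
    (f g : Ω → ℝ) (hf : Measurable f) (hg : Measurable g)
    (hf0 : ∀ x, 0 ≤ f x) (hg0 : ∀ x, 0 ≤ g x)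
    (hfi : Integrable f μ) (hgi : Integrable g μ)
    (hf1 : ∫ x, f x ∂μ = 1) (hg1 : ∫ x, g x ∂μ = 1)
    (n1 n2 : ℝ) (hn1 : 0 < n1) (hn2 : 0 < n2) :
    ∫ x, ((n1 * f x - n2 * g x) / (n1 * f x + n2 * g x)) * (f x - g x) ∂μ
      = (2 * n1 * n2 / (n1 + n2)) * ∫ x, (f x - g x) ^ 2 / (n1 * f x + n2 * g x) ∂μ := by
  set c : ℝ := (n1 - n2) / (n1 + n2) with hc
  set k : ℝ := 2 * n1 * n2 / (n1 + n2) with hk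
  have hnn : (0:ℝ) < n1 + n2 := by linarith
  have hk0 : k ≠ 0 := by
    rw [hk]
    positivity
  have key : ∀ x, (n1 * f x - n2 * g x) / (n1 * f x + n2 * g x) * (f x - g x)
      = c * (f x - g x) + k * ((f x - g x) ^ 2 / (n1 * f x + n2 * g x)) := by
    intro x
    have ha := hf0 x
    have hb := hg0 x
    by_cases hD : n1 * f x + n2 * g x = 0
    · have hfx : f x = 0 := by nlinarith
      have hgx : g x = 0 := by nlinarith
      simp [hfx, hgx]
    · rw [hc, hk]
      field_simp
      ring
  have h1m : Measurable (fun x => (n1 * f x - n2 * g x) / (n1 * f x + n2 * g x) * (f x - g x)) :=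
    (((hf.const_mul n1).sub (hg.const_mul n2)).div
      ((hf.const_mul n1).add (hg.const_mul n2))).mul (hf.sub hg)
  have h1i : Integrable (fun x => (n1 * f x - n2 * g x) / (n1 * f x + n2 * g x) * (f x - g x)) μ := by
    apply Integrable.mono' (hfi.add hgi) h1m.aestronglyMeasurable
    filter_upwards with x
    have ha := hf0 x
    have hb := hg0 x
    have hq : |(n1 * f x - n2 * g x) / (n1 * f x + n2 * g x)| ≤ 1 := by
      by_cases hD : n1 * f x + n2 * g x = 0
      · simp [hD]
      · have hDpos : 0 < n1 * f x + n2 * g x :=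
          lt_of_le_of_ne (by positivity) (Ne.symm hD)
        rw [abs_div, div_le_one (abs_pos.mpr hD)]
        rw [abs_of_pos hDpos, abs_le]
        constructor <;> nlinarith
    have : (f + g) x = f x + g x := rfl
    rw [this, Real.norm_eq_abs]
    calc |(n1 * f x - n2 * g x) / (n1 * f x + n2 * g x) * (f x - g x)|
        = |(n1 * f x - n2 * g x) / (n1 * f x + n2 * g x)| * |f x - g x| := abs_mul _ _
      _ ≤ 1 * |f x - g x| := mul_le_mul_of_nonneg_right hq (abs_nonneg _)
      _ ≤ f x + g x := by rw [one_mul, abs_le]; constructor <;> nlinarith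
  have hfgi : Integrable (fun x => f x - g x) μ := hfi.sub hgi
  have h2i : Integrable (fun x => (f x - g x) ^ 2 / (n1 * f x + n2 * g x)) μ := by
    have : (fun x => (f x - g x) ^ 2 / (n1 * f x + n2 * g x))
        = fun x => k⁻¹ * ((n1 * f x - n2 * g x) / (n1 * f x + n2 * g x) * (f x - g x)
            - c * (f x - g x)) := by
      funext x
      rw [key x]
      field_simp
      ring
    rw [this]
    exact ((h1i.sub (hfgi.const_mul c)).const_mul k⁻¹)
  have hfg0 : ∫ x, (f x - g x) ∂μ = 0 := by
    rw [integral_sub hfi hgi, hf1, hg1]; ring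
  calc ∫ x, (n1 * f x - n2 * g x) / (n1 * f x + n2 * g x) * (f x - g x) ∂μ
      = ∫ x, (c * (f x - g x) + k * ((f x - g x) ^ 2 / (n1 * f x + n2 * g x))) ∂μ := by
        exact integral_congr_ae (Filter.Eventually.of_forall key)
    _ = c * ∫ x, (f x - g x) ∂μ + k * ∫ x, (f x - g x) ^ 2 / (n1 * f x + n2 * g x) ∂μ := by
        rw [integral_add (hfgi.const_mul c) (h2i.const_mul k), integral_const_mul,
          integral_const_mul]
    _ = k * ∫ x, (f x - g x) ^ 2 / (n1 * f x + n2 * g x) ∂μ := by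
        rw [hfg0]; ring
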